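/- Let (X,μ) be a σ-finite measure space, H a Hilbert space, and γ : X → H weakly integrable (p = 1) with separable span. Then the operator A_γ : H → L¹(X,μ), v ↦ ⟨v, γ(·)⟩, is compact. -/

import Mathlib

open MeasureTheory
open scoped InnerProductSpace ENNReal

private lemma sign_sum_aux {H : Type*} [NormedAddCommGroup H] [InnerProductSpace ℂ H]
    (u : ℕ → H) (m : ℕ) :
    ∃ s : ℕ → ℂ, (∀ j, s j = 1 ∨ s j = -1) ∧
      ∑ j ∈ Finset.range m, ‖u j‖ * ‖u j‖ ≤
        ‖∑ j ∈ Finset.range m, s j • u j‖ * ‖∑ j ∈ Finset.range m, s j • u j‖ := by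
  induction m with
  | zero => exact ⟨fun _ => 1, fun _ => Or.inl rfl, by simp⟩
  | succ m ih =>
    obtain ⟨s, hs, hle⟩ := ih
    set a := ∑ j ∈ Finset.range m, s j • u j with ha
    have par : ‖a + u m‖ * ‖a + u m‖ + ‖a - u m‖ * ‖a - u m‖
        = 2 * (‖a‖ * ‖a‖ + ‖u m‖ * ‖u m‖) := by simpa only [sq] using parallelogram_law_with_norm ℂ a (u m)
    have key : ‖a‖ * ‖a‖ + ‖u m‖ * ‖u m‖ ≤ ‖a + u m‖ * ‖a + u m‖ ∨
        ‖a‖ * ‖a‖ + ‖u m‖ * ‖u m‖ ≤ ‖a - u m‖ * ‖a - u m‖ := by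
      by_contra hcon
      push_neg at hcon
      nlinarith [hcon.1, hcon.2]
    rcases key with hk | hk
    · refine ⟨Function.update s m 1, ?_, ?_⟩
      · intro j
        rcases eq_or_ne j m with rfl | hj
        · simp
        · simpa [Function.update_of_ne hj] using hs j
      · have hagree : ∑ j ∈ Finset.range m, Function.update s m 1 j • u j = a := by
          rw [ha]
          refine Finset.sum_congr rfl fun j hj => ?_
          have : j ≠ m := Nat.ne_of_lt (Finset.mem_range.mp hj)
          rw [Function.update_of_ne this]
        simp only [Finset.sum_range_succ]
        rw [hagree, Function.update_self, one_smul]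
        calc (∑ j ∈ Finset.range m, ‖u j‖ * ‖u j‖) + ‖u m‖ * ‖u m‖
            ≤ ‖a‖ * ‖a‖ + ‖u m‖ * ‖u m‖ := by gcongr
          _ ≤ ‖a + u m‖ * ‖a + u m‖ := hk
    · refine ⟨Function.update s m (-1), ?_, ?_⟩
      · intro j
        rcases eq_or_ne j m with rfl | hj
        · simp
        · simpa [Function.update_of_ne hj] using hs j
      · have hagree : ∑ j ∈ Finset.range m, Function.update s m (-1) j • u j = a := by
          rw [ha]
          refine Finset.sum_congr rfl fun j hj => ?_
          have : j ≠ m := Nat.ne_of_lt (Finset.mem_range.mp hj)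
          rw [Function.update_of_ne this]
        simp only [Finset.sum_range_succ]
        rw [hagree, Function.update_self, neg_smul, one_smul]
        calc (∑ j ∈ Finset.range m, ‖u j‖ * ‖u j‖) + ‖u m‖ * ‖u m‖
            ≤ ‖a‖ * ‖a‖ + ‖u m‖ * ‖u m‖ := by gcongr
          _ ≤ ‖a - u m‖ * ‖a - u m‖ := hk
          _ = ‖a + -u m‖ * ‖a + -u m‖ := by rw [sub_eq_add_neg]

private lemma csgn_norm {z : ℂ} : ‖(if z = 0 then 1 else z / (‖z‖ : ℂ))‖ = 1 := by
  split_ifs with h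
  · simp
  · have hz : ‖z‖ ≠ 0 := norm_ne_zero_iff.mpr h
    rw [norm_div, Complex.norm_real, Real.norm_eq_abs, abs_of_nonneg (norm_nonneg z),
      div_self hz]

private lemma csgn_mul {z : ℂ} :
    (starRingEnd ℂ) (if z = 0 then 1 else z / (‖z‖ : ℂ)) * z = (‖z‖ : ℂ) := by
  split_ifs with h
  · simp [h]
  · have hz : (‖z‖ : ℂ) ≠ 0 := by
      simpa using norm_ne_zero_iff.mpr h
    rw [map_div₀, Complex.conj_ofReal, div_mul_eq_mul_div, mul_comm, Complex.mul_conj,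
      Complex.normSq_eq_norm_sq]
    rw [sq]
    push_cast
    rw [mul_div_assoc, div_self hz, mul_one]

private lemma l1_tail_small {H : Type*} [NormedAddCommGroup H] [InnerProductSpace ℂ H]
    (w : ℕ → H) (C : ℝ)
    (hC : ∀ (F : Finset ℕ) (lam : ℕ → ℂ), (∀ n ∈ F, ‖lam n‖ = 1) →
      ‖∑ n ∈ F, lam n • w n‖ ≤ C)
    {δ : ℝ} (hδ : 0 < δ) :
    ∃ N : ℕ, ∀ v : H, ‖v‖ ≤ 1 → ∀ F : Finset ℕ, (∀ n ∈ F, N ≤ n) →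
      ∑ n ∈ F, ‖⟪w n, v⟫_ℂ‖ ≤ δ := by
  by_contra hcon
  push_neg at hcon
  choose V hV F hF hsum using hcon
  -- the block starting points
  let N : ℕ → ℕ := fun j => Nat.rec 0 (fun _ n => (F n).sup id + 1) j
  set B : ℕ → Finset ℕ := fun j => F (N j) with hB
  set v : ℕ → H := fun j => V (N j) with hv
  have hNsucc : ∀ j, N (j + 1) = (B j).sup id + 1 := fun j => rfl
  have hBlow : ∀ j, ∀ n ∈ B j, N j ≤ n := fun j => hF (N j)
  have hBhigh : ∀ j, ∀ n ∈ B j, n < N (j + 1) := by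
    intro j n hn
    rw [hNsucc]
    exact Nat.lt_succ_of_le (Finset.le_sup (f := id) hn)
  have hBne : ∀ j, (B j).Nonempty := by
    intro j
    rcases Finset.eq_empty_or_nonempty (B j) with h | h
    · exfalso
      have h2 : δ < ∑ n ∈ B j, ‖⟪w n, v j⟫_ℂ‖ := hsum (N j)
      rw [h] at h2
      simp at h2
      exact absurd h2 (not_lt.mpr hδ.le)
    · exact h
  have hNmono : StrictMono N := by
    apply strictMono_nat_of_lt_succ
    intro j
    obtain ⟨n, hn⟩ := hBne j
    exact lt_of_le_of_lt (hBlow j n hn) (hBhigh j n hn)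
  have hdisj : ∀ i j, i < j → Disjoint (B i) (B j) := by
    intro i j hij
    rw [Finset.disjoint_left]
    intro n hni hnj
    have h1 : n < N (i + 1) := hBhigh i n hni
    have h2 : N j ≤ n := hBlow j n hnj
    have h3 : N (i + 1) ≤ N j := hNmono.le_iff_le.mpr hij
    omega
  -- the block vectors
  set lam : ℕ → ℕ → ℂ := fun j n =>
    if ⟪w n, v j⟫_ℂ = 0 then 1 else ⟪w n, v j⟫_ℂ / (‖⟪w n, v j⟫_ℂ‖ : ℂ) with hlam
  set u : ℕ → H := fun j => ∑ n ∈ B j, lam j n • w n with hu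
  have huδ : ∀ j, δ ≤ ‖u j‖ := by
    intro j
    have hinner : ⟪u j, v j⟫_ℂ = (↑(∑ n ∈ B j, ‖⟪w n, v j⟫_ℂ‖) : ℂ) := by
      rw [hu]
      push_cast
      rw [sum_inner]
      refine Finset.sum_congr rfl fun n _ => ?_
      rw [inner_smul_left, hlam]
      exact csgn_mul
    have h1 : ∑ n ∈ B j, ‖⟪w n, v j⟫_ℂ‖ ≤ ‖⟪u j, v j⟫_ℂ‖ := by
      rw [hinner, Complex.norm_real, Real.norm_eq_abs,
        abs_of_nonneg (Finset.sum_nonneg fun n _ => norm_nonneg _)]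
    calc δ ≤ ∑ n ∈ B j, ‖⟪w n, v j⟫_ℂ‖ := (hsum (N j)).le
      _ ≤ ‖⟪u j, v j⟫_ℂ‖ := h1
      _ ≤ ‖u j‖ * ‖v j‖ := norm_inner_le_norm _ _
      _ ≤ ‖u j‖ * 1 := by
          have := hV (N j)
          gcongr
      _ = ‖u j‖ := mul_one _
  -- contradiction via sign sums
  obtain ⟨m, hm⟩ := exists_nat_gt (C * C / (δ * δ))
  have hmδ : C * C < m * (δ * δ) := by
    rw [div_lt_iff₀ (by positivity)] at hm
    linarith
  obtain ⟨s, hs, hsle⟩ := sign_sum_aux u m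
  have hlhs : (m : ℝ) * (δ * δ) ≤ ∑ j ∈ Finset.range m, ‖u j‖ * ‖u j‖ := by
    calc (m : ℝ) * (δ * δ) = ∑ _j ∈ Finset.range m, δ * δ := by
          simp [mul_comm]
      _ ≤ ∑ j ∈ Finset.range m, ‖u j‖ * ‖u j‖ := by
          refine Finset.sum_le_sum fun j _ => ?_
          exact mul_le_mul (huδ j) (huδ j) hδ.le (norm_nonneg _)
  -- the big sum is a unimodular combination
  have hpwd : (↑(Finset.range m) : Set ℕ).PairwiseDisjoint B := by
    intro i _ j _ hij
    rcases lt_or_gt_of_ne hij with h | h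
    · exact hdisj i j h
    · exact (hdisj j i h).symm
  set lam' : ℕ → ℂ := fun n =>
    if h : ∃ j, j < m ∧ n ∈ B j then s (Nat.find h) * lam (Nat.find h) n else 1 with hlam'
  have hlam'spec : ∀ j < m, ∀ n ∈ B j, lam' n = s j * lam j n := by
    intro j hj n hn
    have hex : ∃ j', j' < m ∧ n ∈ B j' := ⟨j, hj, hn⟩
    rw [hlam']
    simp only [dif_pos hex]
    obtain ⟨_, hn'⟩ := Nat.find_spec hex
    have : Nat.find hex = j := by
      by_contra hne
      rcases lt_or_gt_of_ne hne with h | h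
      · exact (Finset.disjoint_left.mp (hdisj _ _ h) hn') hn
      · exact (Finset.disjoint_left.mp (hdisj _ _ h) hn) hn'
    rw [this]
  have hsum_eq : ∑ n ∈ (Finset.range m).biUnion B, lam' n • w n
      = ∑ j ∈ Finset.range m, s j • u j := by
    rw [Finset.sum_biUnion hpwd]
    refine Finset.sum_congr rfl fun j hj => ?_
    rw [hu, Finset.smul_sum]
    refine Finset.sum_congr rfl fun n hn => ?_
    rw [hlam'spec j (Finset.mem_range.mp hj) n hn, mul_smul]
  have hCle : ‖∑ j ∈ Finset.range m, s j • u j‖ ≤ C := by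
    rw [← hsum_eq]
    refine hC _ _ fun n hn => ?_
    simp only [Finset.mem_biUnion, Finset.mem_range] at hn
    obtain ⟨j, hj, hnj⟩ := hn
    rw [hlam'spec j hj n hnj, norm_mul]
    have h1 : ‖s j‖ = 1 := by rcases hs j with h | h <;> simp [h]
    have h2 : ‖lam j n‖ = 1 := csgn_norm
    rw [h1, h2, mul_one]
  have hC0 : 0 ≤ C := le_trans (norm_nonneg _) (hC ∅ (fun _ => 1) (by simp) |>.trans_eq (by simp))
  have : (m : ℝ) * (δ * δ) ≤ C * C := by
    calc (m : ℝ) * (δ * δ) ≤ ∑ j ∈ Finset.range m, ‖u j‖ * ‖u j‖ := hlhs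
      _ ≤ ‖∑ j ∈ Finset.range m, s j • u j‖ * ‖∑ j ∈ Finset.range m, s j • u j‖ := hsle
      _ ≤ C * C := mul_le_mul hCle hCle (norm_nonneg _) hC0
  linarith

private lemma norm_le_iff_dense {H : Type*} [NormedAddCommGroup H] [InnerProductSpace ℂ H]
    {d : ℕ → H} {u : H} (hu : u ∈ closure (Set.range d)) {t : ℝ} (ht : 0 ≤ t) :
    ‖u‖ ≤ t ↔ ∀ m, 2 * (⟪u, d m⟫_ℂ).re ≤ ‖d m‖ ^ 2 + t ^ 2 := by
  constructor
  · intro h m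
    have h1 : (⟪u, d m⟫_ℂ).re ≤ ‖u‖ * ‖d m‖ :=
      le_trans (Complex.re_le_norm _)
        (by exact norm_inner_le_norm (𝕜 := ℂ) u (d m))
    nlinarith [norm_nonneg (d m), norm_nonneg u, sq_nonneg (‖u‖ - ‖d m‖),
      pow_le_pow_left₀ (norm_nonneg u) h 2]
  · intro h
    obtain ⟨x, hx, hxu⟩ := mem_closure_iff_seq_limit.mp hu
    have hcont : Continuous fun y : H => 2 * (⟪u, y⟫_ℂ).re - ‖y‖ ^ 2 := by
      have h1 : Continuous fun y : H => ⟪u, y⟫_ℂ := continuous_const.inner continuous_id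
      exact ((continuous_const.mul (Complex.continuous_re.comp h1))).sub
        ((continuous_norm).pow 2)
    have hphi : Filter.Tendsto (fun k => 2 * (⟪u, x k⟫_ℂ).re - ‖x k‖ ^ 2) Filter.atTop
        (nhds (2 * (⟪u, u⟫_ℂ).re - ‖u‖ ^ 2)) := (hcont.tendsto u).comp hxu
    have hle : 2 * (⟪u, u⟫_ℂ).re - ‖u‖ ^ 2 ≤ t ^ 2 := by
      refine le_of_tendsto hphi (Filter.Eventually.of_forall fun k => ?_)
      obtain ⟨m, hm⟩ := hx k
      rw [← hm]
      linarith [h m]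
    have hself : (⟪u, u⟫_ℂ).re = ‖u‖ ^ 2 := by
      simpa using inner_self_eq_norm_sq (𝕜 := ℂ) u
    rw [hself] at hle
    nlinarith [norm_nonneg u]

private lemma exists_dense_seq {H : Type*} [NormedAddCommGroup H] [InnerProductSpace ℂ H]
    (K : Submodule ℂ H) (hsep : TopologicalSpace.IsSeparable (K : Set H)) :
    ∃ d : ℕ → H, (∀ n, d n ∈ K) ∧ ∀ u ∈ K, u ∈ closure (Set.range d) := by
  have hS : TopologicalSpace.SeparableSpace (K : Set H) := hsep.separableSpace
  obtain ⟨s, hsc, hsd⟩ := TopologicalSpace.exists_countable_dense (K : Set H)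
  have hne : s.Nonempty := by
    have : Nonempty (K : Set H) := ⟨⟨0, K.zero_mem⟩⟩
    exact hsd.nonempty
  obtain ⟨f, hf⟩ := (hsc.image (Subtype.val)).exists_eq_range (hne.image _)
  refine ⟨f, ?_, ?_⟩
  · intro n
    have : f n ∈ Subtype.val '' s := by rw [hf]; exact ⟨n, rfl⟩
    obtain ⟨p, _, hp⟩ := this
    rw [← hp]; exact p.2
  · intro u hu
    rw [← hf]
    have h1 : (⟨u, hu⟩ : (K : Set H)) ∈ closure s := by
      rw [hsd.closure_eq]; trivial
    have h2 : u ∈ Subtype.val '' closure s := ⟨⟨u, hu⟩, h1, rfl⟩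
    exact image_closure_subset_closure_image continuous_subtype_val h2


private lemma Lp_coeFn_finset_sum {X : Type*} [MeasurableSpace X] {μ : Measure X}
    (F : Finset ℕ) (f : ℕ → Lp ℂ 1 μ) (φ : ℕ → X → ℂ)
    (h : ∀ n ∈ F, ⇑(f n) =ᵐ[μ] φ n) :
    ⇑(∑ n ∈ F, f n) =ᵐ[μ] fun x => ∑ n ∈ F, φ n x := by
  classical
  induction F using Finset.cons_induction with
  | empty => simp only [Finset.sum_empty]; exact Lp.coeFn_zero ℂ 1 μ
  | cons a s ha ih =>
    rw [Finset.sum_cons]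
    have ih' := ih fun n hn => h n (Finset.mem_cons_of_mem hn)
    filter_upwards [Lp.coeFn_add (f a) (∑ n ∈ s, f n), ih',
      h a (Finset.mem_cons_self a s)] with x h1 h2 h3
    rw [Finset.sum_cons, h1, Pi.add_apply, h3, h2]

set_option maxHeartbeats 1000000 in
set_option synthInstance.maxHeartbeats 400000 in
/-- if `(X,μ)` is σ-finite and `γ : X → H` is weakly integrable
(`x ↦ ⟨v, γ x⟩ = ⟪γ x, v⟫_ℂ` is measurable and in `L¹(X,μ)` for all `v`) with
separable closed span, then the operator `A_γ : H → L¹(X,μ)`, `v ↦ ⟨v, γ(·)⟩`, is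
compact. -/
theorem eval_operator_compact_L1 {X : Type*} [MeasurableSpace X]
    (μ : Measure X) [SigmaFinite μ] {H : Type*} [NormedAddCommGroup H]
    [InnerProductSpace ℂ H] [CompleteSpace H] (γ : X → H)
    (hsep : TopologicalSpace.IsSeparable
      (((Submodule.span ℂ (Set.range γ)).topologicalClosure : Submodule ℂ H) : Set H))
    (hint : ∀ v : H, Measurable (fun x => ⟪γ x, v⟫_ℂ) ∧
      MemLp (fun x => ⟪γ x, v⟫_ℂ) 1 μ) :
    ∃ T : H →L[ℂ] Lp ℂ 1 μ,
      (∀ v : H, (T v : X → ℂ) =ᵐ[μ] fun x => ⟪γ x, v⟫_ℂ) ∧ IsCompactOperator T := by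
  classical
  -- a positive integrable weight
  obtain ⟨w0, hw0pos, hw0meas, hw0int⟩ :=
    exists_pos_lintegral_lt_of_sigmaFinite μ (ε := 1) one_ne_zero
  set w : X → ℝ := fun x => (w0 x : ℝ) with hwdef
  have hwpos : ∀ x, 0 < w x := fun x => by exact_mod_cast hw0pos x
  have hwmeas : Measurable w := NNReal.continuous_coe.measurable.comp hw0meas
  have hwint : Integrable w μ := by
    refine ⟨hwmeas.aestronglyMeasurable, ?_⟩
    rw [hasFiniteIntegral_def]
    have heq : ∀ x, ‖w x‖ₑ = (w0 x : ℝ≥0∞) := by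
      intro x
      rw [enorm_eq_nnnorm]
      congr 1
      exact NNReal.eq (by simp [hwdef, Real.norm_eq_abs, abs_of_nonneg (hwpos x).le])
    simp_rw [heq]
    exact hw0int.trans_le le_top
  set W := ∫ x, w x ∂μ with hWdef
  have hW0 : 0 ≤ W := integral_nonneg fun x => (hwpos x).le
  -- dense sequence in K
  set K := (Submodule.span ℂ (Set.range γ)).topologicalClosure with hKdef
  have hγK : ∀ x, γ x ∈ K :=
    fun x => Submodule.le_topologicalClosure _ (Submodule.subset_span ⟨x, rfl⟩)
  obtain ⟨d, hdK, hdense⟩ := exists_dense_seq K hsep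
  have hint_int : ∀ v, Integrable (fun x => ⟪γ x, v⟫_ℂ) μ := fun v =>
    memLp_one_iff_integrable.mp (hint v).2
  -- the linear map
  set L0 : H → Lp ℂ 1 μ := fun v => ((hint v).2).toLp _ with hL0
  have hL0coe : ∀ v, ⇑(L0 v) =ᵐ[μ] fun x => ⟪γ x, v⟫_ℂ := fun v => MemLp.coeFn_toLp _
  have hadd : ∀ v₁ v₂, L0 (v₁ + v₂) = L0 v₁ + L0 v₂ := by
    intro v₁ v₂
    apply Lp.ext
    filter_upwards [hL0coe (v₁ + v₂), hL0coe v₁, hL0coe v₂,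
      Lp.coeFn_add (L0 v₁) (L0 v₂)] with x h h1 h2 h3
    rw [h3, Pi.add_apply, h, h1, h2, inner_add_right]
  have hsmul : ∀ (c : ℂ) (v : H), L0 (c • v) = c • L0 v := by
    intro c v
    apply Lp.ext
    filter_upwards [hL0coe (c • v), hL0coe v, Lp.coeFn_smul c (L0 v)] with x h h1 h2
    rw [h2, Pi.smul_apply, h, h1, inner_smul_right]
    simp
  set L : H →ₗ[ℂ] Lp ℂ 1 μ :=
    { toFun := L0, map_add' := hadd, map_smul' := hsmul } with hLdef
  -- closed graph
  have hgraph : IsClosed (L.graph : Set (H × Lp ℂ 1 μ)) := by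
    apply IsSeqClosed.isClosed
    intro pn p hpn hlim
    rw [SetLike.mem_coe, LinearMap.mem_graph_iff]
    have hv : Filter.Tendsto (fun n => (pn n).1) Filter.atTop (nhds p.1) :=
      (continuous_fst.tendsto p).comp hlim
    have hf : Filter.Tendsto (fun n => L0 ((pn n).1)) Filter.atTop (nhds p.2) := by
      have h2 : Filter.Tendsto (fun n => (pn n).2) Filter.atTop (nhds p.2) :=
        (continuous_snd.tendsto p).comp hlim
      refine h2.congr fun n => ?_
      have := (hpn n)
      rw [SetLike.mem_coe, LinearMap.mem_graph_iff] at this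
      rw [this]; rfl
    -- convergence in measure, then a.e. subsequence
    have hmeas_n : ∀ n, AEStronglyMeasurable (⇑(L0 ((pn n).1))) μ := fun n =>
      (Lp.memLp _).aestronglyMeasurable
    have htim : TendstoInMeasure μ (fun n => ⇑(L0 ((pn n).1))) Filter.atTop ⇑p.2 := by
      apply tendstoInMeasure_of_tendsto_eLpNorm (p := (1 : ℝ≥0∞)) one_ne_zero hmeas_n
        (Lp.memLp _).aestronglyMeasurable
      have h5 : Filter.Tendsto (fun n => edist (L0 ((pn n).1)) p.2) Filter.atTop (nhds 0) := by
        rw [ENNReal.tendsto_nhds_zero]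
        intro ε hε
        exact (EMetric.tendsto_nhds.mp hf ε hε).mono fun n hn => hn.le
      simpa only [Lp.edist_def] using h5
    obtain ⟨ns, _, hae⟩ := htim.exists_seq_tendsto_ae
    have haeq : ∀ᵐ x ∂μ, ∀ k, (L0 ((pn (ns k)).1)) x = ⟪γ x, (pn (ns k)).1⟫_ℂ :=
      MeasureTheory.ae_all_iff.mpr fun k => hL0coe _
    have : ⇑p.2 =ᵐ[μ] fun x => ⟪γ x, p.1⟫_ℂ := by
      filter_upwards [hae, haeq] with x h1 h2
      have h3 : Filter.Tendsto (fun k => ⟪γ x, (pn (ns k)).1⟫_ℂ) Filter.atTop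
          (nhds ⟪γ x, p.1⟫_ℂ) := by
        have hcont : Continuous fun v : H => ⟪γ x, v⟫_ℂ := continuous_const.inner continuous_id
        exact (hcont.tendsto p.1).comp (hv.comp (‹StrictMono ns›.tendsto_atTop))
      have h4 : Filter.Tendsto (fun k => (L0 ((pn (ns k)).1)) x) Filter.atTop (nhds (p.2 x)) := h1
      rw [show (fun k => (L0 ((pn (ns k)).1)) x) = fun k => ⟪γ x, (pn (ns k)).1⟫_ℂ
        from funext h2] at h4
      exact tendsto_nhds_unique h4 h3
    exact Lp.ext (this.trans (hL0coe p.1).symm)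
  set T : H →L[ℂ] Lp ℂ 1 μ := ContinuousLinearMap.ofIsClosedGraph hgraph with hTdef
  have hTapp : ∀ v, T v = L0 v := fun v => rfl
  have hTcoe : ∀ v : H, ⇑(T v) =ᵐ[μ] fun x => ⟪γ x, v⟫_ℂ := fun v => hL0coe v
  refine ⟨T, hTcoe, ?_⟩
  have happrox : ∀ δ : ℝ, 0 < δ → ∃ S : H →L[ℂ] Lp ℂ 1 μ,
      IsCompactOperator ⇑S ∧ ‖T - S‖ ≤ δ := by
    intro δ hδ
    set ε := δ / (2 * (W + 1)) with hεdef
    have hεpos : 0 < ε := div_pos hδ (by linarith)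
    -- the pointwise characterization of closeness
    have hPiff : ∀ (n : ℕ) (x : X),
        (∀ m, 2 * ((⟪γ x, d m⟫_ℂ).re - (⟪d n, d m⟫_ℂ).re) ≤ ‖d m‖ ^ 2 + (ε * w x) ^ 2)
          ↔ ‖γ x - d n‖ ≤ ε * w x := by
      intro n x
      have hmem : γ x - d n ∈ closure (Set.range d) := hdense _ (K.sub_mem (hγK x) (hdK n))
      have ht : 0 ≤ ε * w x := le_of_lt (mul_pos hεpos (hwpos x))
      rw [norm_le_iff_dense hmem ht]
      refine forall_congr' fun m => ?_
      rw [inner_sub_left, Complex.sub_re]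
    have hex : ∀ x, ∃ n, ∀ m,
        2 * ((⟪γ x, d m⟫_ℂ).re - (⟪d n, d m⟫_ℂ).re) ≤ ‖d m‖ ^ 2 + (ε * w x) ^ 2 := by
      intro x
      have h0 : 0 < ε * w x := mul_pos hεpos (hwpos x)
      have h1 : γ x ∈ closure (Set.range d) := hdense _ (hγK x)
      obtain ⟨y, ⟨n, rfl⟩, hy⟩ := Metric.mem_closure_iff.mp h1 (ε * w x) h0
      exact ⟨n, (hPiff n x).mpr (by rw [← dist_eq_norm]; exact hy.le)⟩
    set nfun : X → ℕ := fun x => Nat.find (hex x) with hnfun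
    have hnmeas : Measurable nfun := by
      apply measurable_find
      intro n
      rw [Set.setOf_forall]
      refine MeasurableSet.iInter fun m => ?_
      apply measurableSet_le
      · exact measurable_const.mul
          ((Complex.measurable_re.comp (hint (d m)).1).sub measurable_const)
      · exact measurable_const.add ((measurable_const.mul hwmeas).pow_const 2)
    set γ1 : X → H := fun x => d (nfun x) with hγ1
    set A : ℕ → Set X := fun n => nfun ⁻¹' {n} with hA
    have hAmeas : ∀ n, MeasurableSet (A n) := fun n => hnmeas (measurableSet_singleton n)
    have hmemA : ∀ x n, x ∈ A n ↔ nfun x = n := fun x n => Iff.rfl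
    have hAdisj : Pairwise (Function.onFun Disjoint A) := by
      intro i j hij
      simp only [Function.onFun]
      apply Set.disjoint_left.mpr
      intro x hxi hxj
      exact hij (((hmemA x i).mp hxi).symm.trans ((hmemA x j).mp hxj))
    have hb1 : ∀ x, ‖γ x - γ1 x‖ ≤ ε * w x := fun x => (hPiff _ x).mp (Nat.find_spec (hex x))
    have hγ1meas : ∀ v, Measurable fun x => ⟪γ1 x, v⟫_ℂ := fun v =>
      (measurable_from_nat (f := fun n => ⟪d n, v⟫_ℂ)).comp hnmeas
    have hdiffb : ∀ v x, ‖⟪γ x, v⟫_ℂ - ⟪γ1 x, v⟫_ℂ‖ ≤ ε * ‖v‖ * w x := by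
      intro v x
      rw [← inner_sub_left]
      calc ‖⟪γ x - γ1 x, v⟫_ℂ‖ ≤ ‖γ x - γ1 x‖ * ‖v‖ := norm_inner_le_norm _ _
        _ ≤ (ε * w x) * ‖v‖ := mul_le_mul_of_nonneg_right (hb1 x) (norm_nonneg v)
        _ = ε * ‖v‖ * w x := by ring
    have hdiffint : ∀ v, Integrable (fun x => ⟪γ x, v⟫_ℂ - ⟪γ1 x, v⟫_ℂ) μ := by
      intro v
      refine Integrable.mono' (hwint.const_mul (ε * ‖v‖))
        ((hint v).1.sub (hγ1meas v)).aestronglyMeasurable ?_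
      exact Filter.Eventually.of_forall fun x => hdiffb v x
    have hγ1int : ∀ v, Integrable (fun x => ⟪γ1 x, v⟫_ℂ) μ := by
      intro v
      have h1 := (hint_int v).sub (hdiffint v)
      have h2 : ((fun x => ⟪γ x, v⟫_ℂ) - fun x => ⟪γ x, v⟫_ℂ - ⟪γ1 x, v⟫_ℂ)
          = fun x => ⟪γ1 x, v⟫_ℂ := by
        funext x
        simp only [Pi.sub_apply]
        ring
      rwa [h2] at h1
    have hTnorm : ∀ v, ‖T v‖ = ∫ x, ‖⟪γ x, v⟫_ℂ‖ ∂μ := by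
      intro v
      rw [L1.norm_eq_integral_norm]
      exact integral_congr_ae ((hTcoe v).mono fun x hx => by dsimp only; rw [hx])
    have hdzero : ∀ n, μ (A n) = ⊤ → d n = 0 := by
      intro n hn
      have h1 : IntegrableOn (fun x => ⟪γ1 x, d n⟫_ℂ) (A n) μ := (hγ1int (d n)).integrableOn
      have h2 : IntegrableOn (fun _ => ⟪d n, d n⟫_ℂ) (A n) μ := by
        refine h1.congr_fun ?_ (hAmeas n)
        intro x hx
        have hxn : nfun x = n := (hmemA x n).mp hx
        simp only [hγ1, hxn]
      rcases integrable_const_iff.mp h2 with h | h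
      · exact inner_self_eq_zero.mp h
      · have h := measure_lt_top (μ.restrict (A n)) Set.univ; rw [Measure.restrict_apply_univ, hn] at h
        exact absurd h (lt_irrefl _)
    set C := ‖T‖ + ε * W with hCdef
    have hC0 : 0 ≤ C := add_nonneg (norm_nonneg _) (mul_nonneg hεpos.le hW0)
    have hγ1normint : ∀ v, ∫ x, ‖⟪γ1 x, v⟫_ℂ‖ ∂μ ≤ C * ‖v‖ := by
      intro v
      have h1 : ∫ x, ‖⟪γ1 x, v⟫_ℂ‖ ∂μ ≤
          ∫ x, (‖⟪γ x, v⟫_ℂ‖ + ‖⟪γ x, v⟫_ℂ - ⟪γ1 x, v⟫_ℂ‖) ∂μ := by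
        refine integral_mono (hγ1int v).norm ((hint_int v).norm.add (hdiffint v).norm) ?_
        intro x
        calc ‖⟪γ1 x, v⟫_ℂ‖ = ‖⟪γ x, v⟫_ℂ - (⟪γ x, v⟫_ℂ - ⟪γ1 x, v⟫_ℂ)‖ := by
              rw [sub_sub_cancel]
          _ ≤ ‖⟪γ x, v⟫_ℂ‖ + ‖⟪γ x, v⟫_ℂ - ⟪γ1 x, v⟫_ℂ‖ := norm_sub_le _ _
      rw [integral_add (hint_int v).norm (hdiffint v).norm] at h1
      have h2 : ∫ x, ‖⟪γ x, v⟫_ℂ - ⟪γ1 x, v⟫_ℂ‖ ∂μ ≤ ε * ‖v‖ * W := by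
        have h3 := integral_mono (hdiffint v).norm (hwint.const_mul (ε * ‖v‖))
          (fun x => hdiffb v x)
        rw [integral_const_mul] at h3
        exact h3.trans_eq (by ring)
      have h4 : ∫ x, ‖⟪γ x, v⟫_ℂ‖ ∂μ ≤ ‖T‖ * ‖v‖ := by
        rw [← hTnorm v]; exact T.le_opNorm v
      calc ∫ x, ‖⟪γ1 x, v⟫_ℂ‖ ∂μ ≤ ‖T‖ * ‖v‖ + ε * ‖v‖ * W := by linarith
        _ = C * ‖v‖ := by rw [hCdef]; ring
    have hAint : ∀ v n, ∫ x in A n, ‖⟪γ1 x, v⟫_ℂ‖ ∂μ = (μ (A n)).toReal * ‖⟪d n, v⟫_ℂ‖ := by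
      intro v n
      rw [setIntegral_congr_fun (hAmeas n) (g := fun _ => ‖⟪d n, v⟫_ℂ‖)
        (fun x hx => by simp only [hγ1, (hmemA x n).mp hx]), setIntegral_const, smul_eq_mul, measureReal_def]
    set wH : ℕ → H := fun n => (((μ (A n)).toReal : ℝ) : ℂ) • d n with hwH
    have hwHinner : ∀ n v, ‖⟪wH n, v⟫_ℂ‖ = (μ (A n)).toReal * ‖⟪d n, v⟫_ℂ‖ := by
      intro n v
      rw [hwH, inner_smul_left, Complex.conj_ofReal, norm_mul, Complex.norm_real,
        Real.norm_eq_abs, abs_of_nonneg ENNReal.toReal_nonneg]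
    have hkey : ∀ (F : Finset ℕ) (lam : ℕ → ℂ), (∀ n ∈ F, ‖lam n‖ = 1) →
        ‖∑ n ∈ F, lam n • wH n‖ ≤ C := by
      intro F lam hlam
      set u := ∑ n ∈ F, lam n • wH n with hu
      rcases eq_or_ne u 0 with h0 | h0
      · rw [h0, norm_zero]; exact hC0
      set v := ((‖u‖⁻¹ : ℝ) : ℂ) • u with hv
      have hvnorm : ‖v‖ = 1 := by
        rw [hv, norm_smul, Complex.norm_real, Real.norm_eq_abs,
          abs_of_nonneg (inv_nonneg.mpr (norm_nonneg u)),
          inv_mul_cancel₀ (norm_ne_zero_iff.mpr h0)]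
      have hval : ‖u‖ = ‖⟪u, v⟫_ℂ‖ := by
        have h1 : ⟪u, v⟫_ℂ = ((‖u‖⁻¹ : ℝ) : ℂ) * ⟪u, u⟫_ℂ := by
          rw [hv, inner_smul_right]
        have h2 : ⟪u, u⟫_ℂ = ((‖u‖ : ℝ) : ℂ) ^ 2 := inner_self_eq_norm_sq_to_K u
        have h3 : ‖u‖ ≠ 0 := norm_ne_zero_iff.mpr h0
        rw [h1, h2, norm_mul, norm_pow, Complex.norm_real, Complex.norm_real,
          Real.norm_eq_abs, Real.norm_eq_abs, abs_of_nonneg (inv_nonneg.mpr (norm_nonneg u)),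
          abs_of_nonneg (norm_nonneg u)]
        field_simp
      have hbound1 : ‖⟪u, v⟫_ℂ‖ ≤ ∑ n ∈ F, ‖⟪wH n, v⟫_ℂ‖ := by
        rw [hu, sum_inner]
        refine le_trans (norm_sum_le _ _) (Finset.sum_le_sum fun n hn => ?_)
        rw [inner_smul_left, norm_mul, RCLike.norm_conj, hlam n hn, one_mul]
      have hbound2 : ∑ n ∈ F, ‖⟪wH n, v⟫_ℂ‖ ≤ ∫ x, ‖⟪γ1 x, v⟫_ℂ‖ ∂μ := by
        have hterm : ∀ n ∈ F, ‖⟪wH n, v⟫_ℂ‖ = ∫ x in A n, ‖⟪γ1 x, v⟫_ℂ‖ ∂μ := by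
          intro n _
          rw [hwHinner, hAint]
        rw [Finset.sum_congr rfl hterm,
          ← integral_biUnion_finset F (fun n _ => hAmeas n)
            (fun i _ j _ hij => hAdisj hij) (fun n _ => (hγ1int v).norm.integrableOn)]
        exact setIntegral_le_integral (hγ1int v).norm
          (Filter.Eventually.of_forall fun x => norm_nonneg _)
      calc ‖u‖ = ‖⟪u, v⟫_ℂ‖ := hval
        _ ≤ ∑ n ∈ F, ‖⟪wH n, v⟫_ℂ‖ := hbound1
        _ ≤ ∫ x, ‖⟪γ1 x, v⟫_ℂ‖ ∂μ := hbound2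
        _ ≤ C * ‖v‖ := hγ1normint v
        _ = C := by rw [hvnorm, mul_one]
    obtain ⟨N, hN⟩ := l1_tail_small wH C hkey (half_pos hδ)
    -- the finite-rank approximant
    set g : ℕ → H →L[ℂ] Lp ℂ 1 μ := fun n =>
      if h : μ (A n) < ⊤ then
        (ContinuousLinearMap.toSpanSingleton ℂ
          (indicatorConstLp 1 (hAmeas n) h.ne (1 : ℂ))).comp
          ((innerSL ℂ (d n) : H →L[ℂ] ℂ))
      else 0 with hg
    set S := ∑ n ∈ Finset.range N, g n with hS
    have hgcoe : ∀ n v, ⇑(g n v) =ᵐ[μ] Set.indicator (A n) (fun _ => ⟪d n, v⟫_ℂ) := by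
      intro n v
      simp only [hg]
      split_ifs with h
      · simp only [ContinuousLinearMap.comp_apply, innerSL_apply_apply,
          ContinuousLinearMap.toSpanSingleton_apply]
        filter_upwards [Lp.coeFn_smul (⟪d n, v⟫_ℂ)
          (indicatorConstLp 1 (hAmeas n) h.ne (1 : ℂ)),
          indicatorConstLp_coeFn (p := (1 : ℝ≥0∞)) (hs := hAmeas n) (hμs := h.ne)
            (c := (1 : ℂ))] with x h1 h2
        rw [h1, Pi.smul_apply, h2]
        by_cases hx : x ∈ A n
        · rw [Set.indicator_of_mem hx, Set.indicator_of_mem hx, smul_eq_mul, mul_one]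
        · rw [Set.indicator_of_notMem hx, Set.indicator_of_notMem hx, smul_zero]
      · have hd0 : d n = 0 := hdzero n (by rwa [not_lt, top_le_iff] at h)
        have hz : (0 : H →L[ℂ] Lp ℂ 1 μ) v = 0 := rfl
        rw [hz]
        filter_upwards [Lp.coeFn_zero ℂ 1 μ] with x hx
        rw [hx, hd0]
        simp
    have hScomp : IsCompactOperator ⇑S := by
      have hfromC : ∀ (f : ℂ →L[ℂ] Lp ℂ 1 μ), IsCompactOperator ⇑f := by
        intro f
        rw [isCompactOperator_iff_exists_mem_nhds_image_subset_compact]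
        exact ⟨Metric.closedBall 0 1, Metric.closedBall_mem_nhds 0 one_pos,
          f '' Metric.closedBall 0 1,
          (isCompact_closedBall 0 1).image f.continuous, Set.Subset.rfl⟩
      have hgcomp : ∀ n, IsCompactOperator ⇑(g n) := by
        intro n
        simp only [hg]
        split_ifs with h
        · have hco : ⇑((ContinuousLinearMap.toSpanSingleton ℂ
              (indicatorConstLp 1 (hAmeas n) h.ne (1 : ℂ))).comp
              ((innerSL ℂ (d n) : H →L[ℂ] ℂ)))
              = ⇑(ContinuousLinearMap.toSpanSingleton ℂ
                (indicatorConstLp 1 (hAmeas n) h.ne (1 : ℂ))) ∘ ⇑(innerSL ℂ (d n)) := rfl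
          rw [hco]
          exact (hfromC _).comp_clm (innerSL ℂ (d n))
        · exact isCompactOperator_zero
      rw [hS]
      refine Finset.sum_induction g (fun f => IsCompactOperator ⇑f) ?_ ?_ ?_
      · intro a b ha hb
        have hab : ⇑(a + b) = ⇑a + ⇑b := rfl
        rw [hab]
        exact ha.add hb
      · exact isCompactOperator_zero
      · intro n _
        exact hgcomp n
    -- tail bound
    set B : Set X := nfun ⁻¹' (Set.Ici N) with hB
    have hBmeas : MeasurableSet B := hnmeas measurableSet_Ici
    have hmemB : ∀ x, x ∈ B ↔ N ≤ nfun x := fun x => Iff.rfl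
    have htail : ∀ v : H, ∫ x in B, ‖⟪γ1 x, v⟫_ℂ‖ ∂μ ≤ (δ / 2) * ‖v‖ := by
      intro v
      rcases eq_or_ne v 0 with rfl | hv0
      · simp [inner_zero_right]
      set v' := ((‖v‖⁻¹ : ℝ) : ℂ) • v with hv'
      have hv1 : ‖v'‖ ≤ 1 := by
        rw [hv', norm_smul, Complex.norm_real, Real.norm_eq_abs,
          abs_of_nonneg (inv_nonneg.mpr (norm_nonneg v)),
          inv_mul_cancel₀ (norm_ne_zero_iff.mpr hv0)]
      have hscale : ∀ u : H, ‖⟪u, v⟫_ℂ‖ = ‖v‖ * ‖⟪u, v'⟫_ℂ‖ := by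
        intro u
        have hrep : v = ((‖v‖ : ℝ) : ℂ) • v' := by
          rw [hv', smul_smul, ← Complex.ofReal_mul,
            mul_inv_cancel₀ (norm_ne_zero_iff.mpr hv0)]
          simp
        conv_lhs => rw [hrep]
        rw [inner_smul_right, norm_mul, Complex.norm_real, Real.norm_eq_abs,
          abs_of_nonneg (norm_nonneg v)]
      simp_rw [hscale]
      rw [integral_const_mul]
      rw [mul_comm (δ / 2) ‖v‖]
      refine mul_le_mul_of_nonneg_left ?_ (norm_nonneg v)
      -- main tail estimate for the unit vector v'
      have hBun : B = ⋃ j : ℕ, A (N + j) := by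
        ext x
        simp only [hmemB, Set.mem_iUnion, hmemA]
        constructor
        · intro hx; exact ⟨nfun x - N, by omega⟩
        · rintro ⟨j, hj⟩; omega
      rw [hBun, integral_iUnion (fun j => hAmeas (N + j))
        (fun i j hij => hAdisj (show N + i ≠ N + j by omega))
        ((hγ1int v').norm.integrableOn)]
      refine tsum_le_of_sum_le' (half_pos hδ).le ?_
      intro F'
      have himg : ∑ j ∈ F', ∫ x in A (N + j), ‖⟪γ1 x, v'⟫_ℂ‖ ∂μ
          = ∑ n ∈ F'.image (fun j => N + j), ‖⟪wH n, v'⟫_ℂ‖ := by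
        rw [Finset.sum_image (fun a _ b _ hab => by omega)]
        refine Finset.sum_congr rfl fun j _ => ?_
        rw [hAint, hwHinner]
      rw [himg]
      refine hN v' hv1 _ fun n hn => ?_
      obtain ⟨j, _, rfl⟩ := Finset.mem_image.mp hn
      omega
    -- the operator norm bound
    refine ⟨S, hScomp, ?_⟩
    refine ContinuousLinearMap.opNorm_le_bound _ hδ.le fun v => ?_
    have hSv : ⇑(S v) =ᵐ[μ]
        fun x => ∑ n ∈ Finset.range N, Set.indicator (A n) (fun _ => ⟪d n, v⟫_ℂ) x := by
      have h1 : S v = ∑ n ∈ Finset.range N, g n v := by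
        rw [hS, ContinuousLinearMap.sum_apply]
      rw [h1]
      exact Lp_coeFn_finset_sum (Finset.range N) (fun n => g n v) _ fun n _ => hgcoe n v
    have hTSv : ⇑((T - S) v) =ᵐ[μ] fun x => ⟪γ x, v⟫_ℂ -
        ∑ n ∈ Finset.range N, Set.indicator (A n) (fun _ => ⟪d n, v⟫_ℂ) x := by
      have h0 : (T - S) v = T v - S v := rfl
      rw [h0]
      filter_upwards [Lp.coeFn_sub (T v) (S v), hTcoe v, hSv] with x h1 h2 h3
      rw [h1, Pi.sub_apply, h2, h3]
    have hsum_pt : ∀ x, ∑ n ∈ Finset.range N, Set.indicator (A n) (fun _ => ⟪d n, v⟫_ℂ) x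
        = if nfun x < N then ⟪γ1 x, v⟫_ℂ else 0 := by
      intro x
      by_cases hx : nfun x < N
      · rw [if_pos hx]
        rw [Finset.sum_eq_single (nfun x)]
        · rw [Set.indicator_of_mem ((hmemA x (nfun x)).mpr rfl)]
        · intro n _ hne
          exact Set.indicator_of_notMem (fun hmem => absurd ((hmemA x n).mp hmem).symm hne) _
        · intro hn
          exact absurd (Finset.mem_range.mpr hx) hn
      · rw [if_neg hx]
        refine Finset.sum_eq_zero fun n hn => ?_
        refine Set.indicator_of_notMem (fun hmem => ?_) _
        have h' : nfun x = n := (hmemA x n).mp hmem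
        exact hx (by rw [h']; exact Finset.mem_range.mp hn)
    have hfun_eq : ⇑((T - S) v) =ᵐ[μ]
        fun x => ⟪γ x, v⟫_ℂ - (if nfun x < N then ⟪γ1 x, v⟫_ℂ else 0) := by
      refine hTSv.mono fun x hx => ?_
      dsimp only at hx ⊢
      rw [hx, hsum_pt x]
    have hnorm_eq : ‖(T - S) v‖ =
        ∫ x, ‖⟪γ x, v⟫_ℂ - (if nfun x < N then ⟪γ1 x, v⟫_ℂ else 0)‖ ∂μ := by
      rw [L1.norm_eq_integral_norm]
      exact integral_congr_ae (hfun_eq.mono fun x hx => by dsimp only; rw [hx])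
    have hint_lhs : Integrable
        (fun x => ⟪γ x, v⟫_ℂ - (if nfun x < N then ⟪γ1 x, v⟫_ℂ else 0)) μ :=
      (L1.integrable_coeFn _).congr hfun_eq
    have hpt : ∀ x, ‖⟪γ x, v⟫_ℂ - (if nfun x < N then ⟪γ1 x, v⟫_ℂ else 0)‖
        ≤ ε * ‖v‖ * w x + Set.indicator B (fun y => ‖⟪γ1 y, v⟫_ℂ‖) x := by
      intro x
      by_cases hx : nfun x < N
      · rw [if_pos hx, Set.indicator_of_notMem (by
          rw [hmemB]; omega)]
        rw [add_zero]
        exact hdiffb v x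
      · rw [if_neg hx, sub_zero, Set.indicator_of_mem ((hmemB x).mpr (not_lt.mp hx))]
        calc ‖⟪γ x, v⟫_ℂ‖
            = ‖(⟪γ x, v⟫_ℂ - ⟪γ1 x, v⟫_ℂ) + ⟪γ1 x, v⟫_ℂ‖ := by rw [sub_add_cancel]
          _ ≤ ‖⟪γ x, v⟫_ℂ - ⟪γ1 x, v⟫_ℂ‖ + ‖⟪γ1 x, v⟫_ℂ‖ := norm_add_le _ _
          _ ≤ ε * ‖v‖ * w x + ‖⟪γ1 x, v⟫_ℂ‖ := by
              have := hdiffb v x; linarith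
    have hεW : ε * W ≤ δ / 2 := by
      rw [hεdef, div_mul_eq_mul_div, div_le_div_iff₀ (by linarith) two_pos]
      nlinarith [hδ, hW0]
    calc ‖(T - S) v‖
        = ∫ x, ‖⟪γ x, v⟫_ℂ - (if nfun x < N then ⟪γ1 x, v⟫_ℂ else 0)‖ ∂μ := hnorm_eq
      _ ≤ ∫ x, (ε * ‖v‖ * w x + Set.indicator B (fun y => ‖⟪γ1 y, v⟫_ℂ‖) x) ∂μ :=
          integral_mono hint_lhs.norm
            ((hwint.const_mul _).add ((hγ1int v).norm.indicator hBmeas)) hpt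
      _ = ε * ‖v‖ * W + ∫ x in B, ‖⟪γ1 x, v⟫_ℂ‖ ∂μ := by
          rw [integral_add (hwint.const_mul _) ((hγ1int v).norm.indicator hBmeas),
            integral_const_mul, integral_indicator hBmeas, ← hWdef]
      _ ≤ ε * ‖v‖ * W + (δ / 2) * ‖v‖ := by
          have := htail v; linarith
      _ ≤ δ * ‖v‖ := by nlinarith [norm_nonneg v, hεW, hW0, mul_nonneg hεpos.le (norm_nonneg v)]
  choose Sa hSc hSle using fun k : ℕ => happrox (1 / ((k : ℝ) + 1)) (by positivity)
  have htend : Filter.Tendsto Sa Filter.atTop (nhds T) := by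
    rw [tendsto_iff_norm_sub_tendsto_zero]
    refine squeeze_zero (fun k => norm_nonneg _) (fun k => ?_)
      tendsto_one_div_add_atTop_nhds_zero_nat
    rw [norm_sub_rev]
    exact hSle k
  exact isCompactOperator_of_tendsto htend (Filter.Eventually.of_forall hSc)
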